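/- For every natural number n and every real number λ, the power series Q(r) := rⁿ · ∑_{k=0}^{∞} (−1)ᵏ · λ^{2k} · r^{2k} / (k! · (n+1)(n+2)···(n+k)) converges for every real r, and the function Q so defined is twice differentiable and satisfies the radial equation r²·Q''(r) + r·Q'(r) + (4λ²r² − n²)·Q(r) = 0 for all real r. -/

import Mathlib

open Real

/-- The power series solution `Q(r) = rⁿ · ∑ (−1)ᵏ λ^{2k} r^{2k} / (k! (n+1)⋯(n+k))`
of the radial equation for the circular membrane. -/
noncomputable def besselRadialSolution (n : ℕ) (lam : ℝ) (r : ℝ) : ℝ :=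
  r ^ n * ∑' k : ℕ,
    (-1 : ℝ) ^ k * lam ^ (2 * k) * r ^ (2 * k) /
      (k.factorial * ∏ j ∈ Finset.range k, ((n : ℝ) + (j : ℝ) + 1))

section BesselAux

noncomputable def bA (n : ℕ) (lam : ℝ) (k : ℕ) : ℝ :=
  (-1 : ℝ) ^ k * lam ^ (2 * k) /
      (k.factorial * ∏ j ∈ Finset.range k, ((n : ℝ) + (j : ℝ) + 1))

lemma bProd_pos (n k : ℕ) : 0 < ∏ j ∈ Finset.range k, ((n : ℝ) + (j : ℝ) + 1) :=
  Finset.prod_pos (fun j _ => by positivity)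

lemma one_le_bProd (n k : ℕ) : 1 ≤ ∏ j ∈ Finset.range k, ((n : ℝ) + (j : ℝ) + 1) := by
  have h := Finset.prod_le_prod (s := Finset.range k) (f := fun _ : ℕ => (1:ℝ))
    (g := fun j : ℕ => ((n : ℝ) + (j : ℝ) + 1))
    (fun _ _ => zero_le_one)
    (fun j _ => by
      have h0 : (0:ℝ) ≤ (n : ℝ) + (j : ℝ) := by positivity
      linarith)
  simpa using h

lemma abs_bA_le (n : ℕ) (lam : ℝ) (k : ℕ) :
    |bA n lam k| ≤ (lam ^ 2) ^ k / k.factorial := by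
  have hd : (0:ℝ) < k.factorial * ∏ j ∈ Finset.range k, ((n : ℝ) + (j : ℝ) + 1) := by
    have := bProd_pos n k
    have : (0:ℝ) < k.factorial := by positivity
    positivity
  rw [bA, abs_div, abs_mul, abs_pow, abs_pow, abs_neg, abs_one, one_pow, one_mul,
    abs_of_pos hd]
  rw [pow_mul, ← abs_pow, abs_pow, sq_abs]
  apply div_le_div_of_nonneg_left (by positivity) (by positivity)
  calc ((k.factorial : ℝ)) = k.factorial * 1 := (mul_one _).symm
    _ ≤ _ := by
        apply mul_le_mul_of_nonneg_left (one_le_bProd n k) (by positivity)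

lemma coeff_le (n k : ℕ) : ((n + 2*k : ℕ) : ℝ)^2 ≤ 4^n * 16^k := by
  have h : (n + 2*k) < 2^(n + 2*k) := Nat.lt_two_pow_self
  have h' : ((n + 2*k : ℕ) : ℝ) ≤ (2:ℝ)^(n + 2*k) := by
    exact_mod_cast h.le
  calc ((n + 2*k : ℕ) : ℝ)^2 ≤ ((2:ℝ)^(n + 2*k))^2 :=
        pow_le_pow_left₀ (by positivity) h' 2
    _ = 4^n * 16^k := by
        rw [← pow_mul]
        have : (4:ℝ)^n * 16^k = ((2:ℝ)^2)^n * ((2:ℝ)^4)^k := by norm_num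
        rw [this, ← pow_mul, ← pow_mul, ← pow_add]
        ring_nf

lemma key_bound (n : ℕ) (lam : ℝ) (R x : ℝ) (hR : 1 ≤ R) (hx : |x| ≤ R) (k j : ℕ)
    (c : ℝ) (hc : |c| ≤ 4^n * 16^k) :
    |bA n lam k * c * x ^ (n + 2*k - j)| ≤
      (4:ℝ)^n * R^n * ((16 * lam^2 * R^2)^k / k.factorial) := by
  have hR0 : (0:ℝ) ≤ R := le_trans zero_le_one hR
  have h1 : |x| ^ (n + 2*k - j) ≤ R ^ (n + 2*k) := by
    calc |x| ^ (n + 2*k - j) ≤ R ^ (n + 2*k - j) :=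
          pow_le_pow_left₀ (abs_nonneg x) hx _
      _ ≤ R ^ (n + 2*k) := pow_le_pow_right₀ hR (Nat.sub_le _ _)
  have h2 := abs_bA_le n lam k
  calc |bA n lam k * c * x ^ (n + 2*k - j)|
      = |bA n lam k| * |c| * |x| ^ (n + 2*k - j) := by
        rw [abs_mul, abs_mul, abs_pow]
    _ ≤ ((lam^2)^k / k.factorial) * (4^n * 16^k) * R ^ (n + 2*k) := by
        gcongr
    _ = (4:ℝ)^n * R^n * ((16 * lam^2 * R^2)^k / k.factorial) := by
        rw [pow_add, pow_mul, mul_pow, mul_pow]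
        field_simp


noncomputable def bf (n : ℕ) (lam : ℝ) (k : ℕ) (r : ℝ) : ℝ :=
  bA n lam k * r ^ (n + 2*k)
noncomputable def bf1 (n : ℕ) (lam : ℝ) (k : ℕ) (r : ℝ) : ℝ :=
  bA n lam k * ((n + 2*k : ℕ) : ℝ) * r ^ (n + 2*k - 1)
noncomputable def bf2 (n : ℕ) (lam : ℝ) (k : ℕ) (r : ℝ) : ℝ :=
  bA n lam k * (((n + 2*k : ℕ) : ℝ) * ((n + 2*k - 1 : ℕ) : ℝ)) * r ^ (n + 2*k - 2)

noncomputable def bu (n : ℕ) (lam : ℝ) (R : ℝ) (k : ℕ) : ℝ :=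
  (4:ℝ)^n * R^n * ((16 * lam^2 * R^2)^k / k.factorial)

lemma bu_summable (n : ℕ) (lam : ℝ) (R : ℝ) : Summable (bu n lam R) :=
  (Real.summable_pow_div_factorial (16 * lam^2 * R^2)).mul_left _

-- coefficient bounds
lemma one_le_416 (n k : ℕ) : (1:ℝ) ≤ 4^n * 16^k := by
  have h1 : (1:ℝ) ≤ 4^n := one_le_pow₀ (by norm_num)
  have h2 : (1:ℝ) ≤ 16^k := one_le_pow₀ (by norm_num)
  nlinarith


lemma coeff1_le (n k : ℕ) : |((n + 2*k : ℕ) : ℝ)| ≤ 4^n * 16^k := by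
  rw [abs_of_nonneg (Nat.cast_nonneg _)]
  have h := coeff_le n k
  nlinarith [Nat.cast_nonneg (α := ℝ) (n + 2*k), one_le_416 n k, coeff_le n k,
    sq_nonneg (((n + 2*k : ℕ) : ℝ) - 1)]

lemma coeff2_le (n k : ℕ) :
    |((n + 2*k : ℕ) : ℝ) * ((n + 2*k - 1 : ℕ) : ℝ)| ≤ 4^n * 16^k := by
  rw [abs_of_nonneg (by positivity)]
  have h1 : ((n + 2*k - 1 : ℕ) : ℝ) ≤ ((n + 2*k : ℕ) : ℝ) := by
    exact Nat.cast_le.mpr (Nat.sub_le _ _)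
  calc ((n + 2*k : ℕ) : ℝ) * ((n + 2*k - 1 : ℕ) : ℝ)
      ≤ ((n + 2*k : ℕ) : ℝ) * ((n + 2*k : ℕ) : ℝ) := by
        exact mul_le_mul_of_nonneg_left h1 (Nat.cast_nonneg _)
    _ = ((n + 2*k : ℕ) : ℝ)^2 := (sq _).symm
    _ ≤ _ := coeff_le n k

-- bounds on bf, bf1, bf2
lemma bf_bound (n : ℕ) (lam : ℝ) (R x : ℝ) (hR : 1 ≤ R) (hx : |x| ≤ R) (k : ℕ) :
    |bf n lam k x| ≤ bu n lam R k := by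
  have h := key_bound n lam R x hR hx k 0 1 (by simpa using one_le_416 n k)
  simpa [bf, bu] using h

lemma bf1_bound (n : ℕ) (lam : ℝ) (R x : ℝ) (hR : 1 ≤ R) (hx : |x| ≤ R) (k : ℕ) :
    |bf1 n lam k x| ≤ bu n lam R k := by
  have h := key_bound n lam R x hR hx k 1 _ (coeff1_le n k)
  simpa [bf1, bu] using h

lemma bf2_bound (n : ℕ) (lam : ℝ) (R x : ℝ) (hR : 1 ≤ R) (hx : |x| ≤ R) (k : ℕ) :
    |bf2 n lam k x| ≤ bu n lam R k := by
  have h := key_bound n lam R x hR hx k 2 _ (coeff2_le n k)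
  simpa [bf2, bu, mul_assoc] using h

-- summability at each point
lemma bf_summable (n : ℕ) (lam : ℝ) (r : ℝ) : Summable (fun k => bf n lam k r) := by
  apply Summable.of_abs
  apply Summable.of_nonneg_of_le (fun k => abs_nonneg _)
    (fun k => bf_bound n lam (|r|+1) r (by linarith [abs_nonneg r]) (by linarith [abs_nonneg r]) k)
    (bu_summable n lam (|r|+1))

lemma bf1_summable (n : ℕ) (lam : ℝ) (r : ℝ) : Summable (fun k => bf1 n lam k r) := by
  apply Summable.of_abs
  apply Summable.of_nonneg_of_le (fun k => abs_nonneg _)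
    (fun k => bf1_bound n lam (|r|+1) r (by linarith [abs_nonneg r]) (by linarith [abs_nonneg r]) k)
    (bu_summable n lam (|r|+1))

lemma bf2_summable (n : ℕ) (lam : ℝ) (r : ℝ) : Summable (fun k => bf2 n lam k r) := by
  apply Summable.of_abs
  apply Summable.of_nonneg_of_le (fun k => abs_nonneg _)
    (fun k => bf2_bound n lam (|r|+1) r (by linarith [abs_nonneg r]) (by linarith [abs_nonneg r]) k)
    (bu_summable n lam (|r|+1))

-- derivatives of the terms
lemma hasDerivAt_bf (n : ℕ) (lam : ℝ) (k : ℕ) (x : ℝ) :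
    HasDerivAt (bf n lam k) (bf1 n lam k x) x := by
  have h := (hasDerivAt_pow (n + 2*k) x).const_mul (bA n lam k)
  simp only [bf1, mul_assoc]
  exact h

lemma hasDerivAt_bf1 (n : ℕ) (lam : ℝ) (k : ℕ) (x : ℝ) :
    HasDerivAt (bf1 n lam k) (bf2 n lam k x) x := by
  have h := (hasDerivAt_pow (n + 2*k - 1) x).const_mul
    (bA n lam k * ((n + 2*k : ℕ) : ℝ))
  have he : n + 2*k - 1 - 1 = n + 2*k - 2 := by omega
  simp only [bf1, bf2]
  convert h using 1
  · rfl
  · rfl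
  · rfl
  rw [he]
  ring

-- the two tsum derivative statements
lemma hasDerivAt_Q (n : ℕ) (lam : ℝ) (r : ℝ) :
    HasDerivAt (fun x => ∑' k, bf n lam k x) (∑' k, bf1 n lam k r) r := by
  set R := |r| + 1 with hRdef
  have hR : 1 ≤ R := by rw [hRdef]; linarith [abs_nonneg r]
  apply hasDerivAt_tsum_of_isPreconnected (bu_summable n lam R)
    (Metric.isOpen_ball (x := (0:ℝ)) (ε := R))
    ((convex_ball (0:ℝ) R).isPreconnected)
    (fun k y _ => hasDerivAt_bf n lam k y)
    (fun k y hy => by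
      have hy' : |y| ≤ R := by
        simpa [Real.dist_eq] using (le_of_lt (Metric.mem_ball.mp hy))
      simpa using bf1_bound n lam R y hR hy' k)
    (show r ∈ Metric.ball (0:ℝ) R by
      simp [Metric.mem_ball, Real.dist_eq, hRdef])
    (bf_summable n lam r)
    (show r ∈ Metric.ball (0:ℝ) R by
      simp [Metric.mem_ball, Real.dist_eq, hRdef])

lemma hasDerivAt_Q1 (n : ℕ) (lam : ℝ) (r : ℝ) :
    HasDerivAt (fun x => ∑' k, bf1 n lam k x) (∑' k, bf2 n lam k r) r := by
  set R := |r| + 1 with hRdef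
  have hR : 1 ≤ R := by rw [hRdef]; linarith [abs_nonneg r]
  apply hasDerivAt_tsum_of_isPreconnected (bu_summable n lam R)
    (Metric.isOpen_ball (x := (0:ℝ)) (ε := R))
    ((convex_ball (0:ℝ) R).isPreconnected)
    (fun k y _ => hasDerivAt_bf1 n lam k y)
    (fun k y hy => by
      have hy' : |y| ≤ R := by
        simpa [Real.dist_eq] using (le_of_lt (Metric.mem_ball.mp hy))
      simpa using bf2_bound n lam R y hR hy' k)
    (show r ∈ Metric.ball (0:ℝ) R by
      simp [Metric.mem_ball, Real.dist_eq, hRdef])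
    (bf1_summable n lam r)
    (show r ∈ Metric.ball (0:ℝ) R by
      simp [Metric.mem_ball, Real.dist_eq, hRdef])


lemma bessel_eq (n : ℕ) (lam : ℝ) :
    besselRadialSolution n lam = fun r => ∑' k, bf n lam k r := by
  funext r
  rw [besselRadialSolution, ← tsum_mul_left]
  apply tsum_congr
  intro k
  rw [bf, bA, pow_add, pow_mul]
  ring

-- the telescoping term
noncomputable def bv (n : ℕ) (lam : ℝ) (r : ℝ) (k : ℕ) : ℝ :=
  4 * (k : ℝ) * ((n : ℝ) + k) * bA n lam k * r ^ (n + 2*k)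

lemma bv_summable (n : ℕ) (lam : ℝ) (r : ℝ) : Summable (bv n lam r) := by
  apply Summable.of_abs
  apply Summable.of_nonneg_of_le (fun k => abs_nonneg _) _
    (bu_summable n lam (|r|+1))
  intro k
  have hc : |4 * (k : ℝ) * ((n : ℝ) + k)| ≤ 4^n * 16^k := by
    rw [abs_of_nonneg (by positivity)]
    have h := coeff_le n k
    push_cast at h ⊢
    nlinarith [sq_nonneg ((n:ℝ))]
  have h := key_bound n lam (|r|+1) r (by linarith [abs_nonneg r])
    (by linarith [abs_nonneg r]) k 0 _ hc
  rw [Nat.sub_zero] at h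
  calc |bv n lam r k| = |bA n lam k * (4 * (k : ℝ) * ((n : ℝ) + k)) * r ^ (n + 2*k)| := by
        rw [bv]; congr 1; ring
    _ ≤ bu n lam (|r|+1) k := h

-- recurrence
lemma bA_rec (n : ℕ) (lam : ℝ) (k : ℕ) :
    4 * lam^2 * bA n lam k = -(4 * ((k:ℝ)+1) * ((n : ℝ) + (k+1))) * bA n lam (k+1) := by
  have hp := bProd_pos n k
  have hf : (0:ℝ) < k.factorial := by positivity
  rw [bA, bA, Finset.prod_range_succ, Nat.factorial_succ]
  have h2 : 2 * (k+1) = 2*k + 2 := by ring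
  rw [h2, pow_add, pow_succ]
  push_cast
  field_simp
  ring

-- per-term ODE identity
lemma term_ode (n : ℕ) (lam : ℝ) (r : ℝ) (k : ℕ) :
    r^2 * bf2 n lam k r + r * bf1 n lam k r +
      (4 * lam^2 * r^2 - (n:ℝ)^2) * bf n lam k r
    = bv n lam r k - bv n lam r (k+1) := by
  have hpow2 : ∀ m : ℕ, r^2 * r^(m-2) * (((m:ℕ):ℝ) * ((m-1 : ℕ):ℝ))
      = ((m:ℝ)^2 - (m:ℝ)) * r^m := by
    intro m
    match m with
    | 0 => simp
    | 1 => norm_num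
    | (m+2) =>
      push_cast [Nat.succ_sub_one]
      rw [pow_add]
      ring
  have hpow1 : ∀ m : ℕ, r * r^(m-1) * ((m:ℕ):ℝ) = (m:ℝ) * r^m := by
    intro m
    match m with
    | 0 => simp
    | (m+1) =>
      push_cast [Nat.succ_sub_one]
      rw [pow_succ]
      ring
  have hrec := bA_rec n lam k
  have e2 : r^2 * bf2 n lam k r
      = bA n lam k * ((((n+2*k : ℕ):ℝ)^2 - ((n+2*k : ℕ):ℝ)) * r^(n+2*k)) := by
    rw [bf2, ← hpow2 (n+2*k)]; ring
  have e1 : r * bf1 n lam k r = bA n lam k * (((n+2*k : ℕ):ℝ) * r^(n+2*k)) := by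
    rw [bf1, ← hpow1 (n+2*k)]; ring
  have hsplit : r^(n+2*(k+1)) = r^(n+2*k) * r^2 := by
    have h : n+2*(k+1) = (n+2*k)+2 := by ring
    rw [h, pow_add]
  rw [e2, e1, bf, bv, bv, hsplit]
  push_cast
  linear_combination (r^(n+2*k) * r^2) * hrec

lemma telescope_zero (n : ℕ) (lam : ℝ) (r : ℝ) :
    ∑' k, (bv n lam r k - bv n lam r (k+1)) = 0 := by
  have hv := bv_summable n lam r
  have hv' : Summable (fun k => bv n lam r (k+1)) := (summable_nat_add_iff 1).2 hv
  rw [Summable.tsum_sub hv hv']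
  have h0 := Summable.tsum_eq_zero_add hv
  have hb0 : bv n lam r 0 = 0 := by simp [bv]
  rw [h0, hb0]
  ring

end BesselAux

theorem besselRadialSolution_solves_radial_equation (n : ℕ) (lam : ℝ) :
    (∀ r : ℝ, Summable (fun k : ℕ =>
      (-1 : ℝ) ^ k * lam ^ (2 * k) * r ^ (2 * k) /
        (k.factorial * ∏ j ∈ Finset.range k, ((n : ℝ) + (j : ℝ) + 1)))) ∧
    Differentiable ℝ (besselRadialSolution n lam) ∧
    Differentiable ℝ (deriv (besselRadialSolution n lam)) ∧
    ∀ r : ℝ,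
      r ^ 2 * deriv (deriv (besselRadialSolution n lam)) r +
        r * deriv (besselRadialSolution n lam) r +
        (4 * lam ^ 2 * r ^ 2 - (n : ℝ) ^ 2) * besselRadialSolution n lam r = 0 := by
  have hQeq := bessel_eq n lam
  have hderiv1 : deriv (besselRadialSolution n lam) = fun r => ∑' k, bf1 n lam k r := by
    funext r
    rw [hQeq]
    exact (hasDerivAt_Q n lam r).deriv
  have hderiv2 : deriv (deriv (besselRadialSolution n lam)) = fun r => ∑' k, bf2 n lam k r := by
    funext r
    rw [hderiv1]
    exact (hasDerivAt_Q1 n lam r).deriv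
  refine ⟨?_, ?_, ?_, ?_⟩
  · -- summability of the original series
    intro r
    have h := bf_summable n lam r
    apply Summable.of_abs
    apply Summable.of_nonneg_of_le (fun k => abs_nonneg _) _
      (Real.summable_pow_div_factorial (lam^2 * r^2))
    intro k
    have hd : (0:ℝ) < k.factorial * ∏ j ∈ Finset.range k, ((n : ℝ) + (j : ℝ) + 1) := by
      have h1 := bProd_pos n k
      have h2 : (0:ℝ) < k.factorial := by positivity
      positivity
    have habs : |(-1 : ℝ) ^ k * lam ^ (2 * k) * r ^ (2 * k) /
        (k.factorial * ∏ j ∈ Finset.range k, ((n : ℝ) + (j : ℝ) + 1))|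
        = (lam^2)^k * (r^2)^k / (k.factorial * ∏ j ∈ Finset.range k, ((n : ℝ) + (j : ℝ) + 1)) := by
      rw [abs_div, abs_of_pos hd, abs_mul, abs_mul, abs_pow, abs_pow, abs_pow, abs_neg,
        abs_one, one_pow, one_mul, pow_mul, pow_mul, ← abs_pow, abs_pow, sq_abs,
        ← abs_pow, abs_pow, sq_abs]
    rw [habs]
    have hnum : (lam^2)^k * (r^2)^k = (lam^2 * r^2)^k := (mul_pow _ _ _).symm
    rw [hnum]
    apply div_le_div_of_nonneg_left (by positivity) (by positivity)
    calc ((k.factorial : ℝ)) = k.factorial * 1 := (mul_one _).symm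
      _ ≤ _ := by
          apply mul_le_mul_of_nonneg_left (one_le_bProd n k) (by positivity)
  · rw [hQeq]
    exact fun r => (hasDerivAt_Q n lam r).differentiableAt
  · rw [hderiv1]
    exact fun r => (hasDerivAt_Q1 n lam r).differentiableAt
  · intro r
    rw [hderiv2, hderiv1, hQeq]
    simp only []
    rw [← tsum_mul_left, ← tsum_mul_left, ← tsum_mul_left]
    have h2 : Summable (fun k => r^2 * bf2 n lam k r) := (bf2_summable n lam r).mul_left _
    have h1 : Summable (fun k => r * bf1 n lam k r) := (bf1_summable n lam r).mul_left _
    have h0 : Summable (fun k => (4 * lam^2 * r^2 - (n:ℝ)^2) * bf n lam k r) :=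
      (bf_summable n lam r).mul_left _
    rw [← Summable.tsum_add h2 h1, ← Summable.tsum_add (h2.add h1) h0]
    have hcong : ∑' k, (r^2 * bf2 n lam k r + r * bf1 n lam k r +
        (4 * lam^2 * r^2 - (n:ℝ)^2) * bf n lam k r)
        = ∑' k, (bv n lam r k - bv n lam r (k+1)) :=
      tsum_congr (fun k => term_ode n lam r k)
    rw [hcong]
    exact telescope_zero n lam r
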